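/- Let d ≥ 1, U ≥ 1, D > 1, and let f : ℝ^d → ℝ be convex and integrable with respect to every nondegenerate product Gaussian measure on ℝ^d. Let Θ̃ = {(μ,C) ∈ ℝ^d × ℝ^d : |μ_i| ≤ U and D⁻¹ ≤ C_ii² ≤ D with C_ii > 0 for all i}. Define L(μ,C) = ∫ f(μ + C ⊙ ε) dγ_d(ε) + (1/2)·Σ_i (C_ii² + μ_i² − 1) − Σ_i log C_ii, where γ_d is the standard Gaussian product measure on ℝ^d and ⊙ is the entrywise product. Then: (i) L is 1-strongly convex (with respect to the Euclidean norm) on the convex set Θ̃; and (ii) the map c⁻¹(μ,C) = (μ, (C_ii² + μ_i²)_i) satisfies ‖c⁻¹(θ₁) − c⁻¹(θ₂)‖ ≤ √(4U² + 4D + 1)·‖θ₁ − θ₂‖ for all θ₁, θ₂ ∈ Θ̃; equivalently, its inverse c satisfies ‖c(ω₁) − c(ω₂)‖ ≥ (4U² + 4D + 1)^{−1/2}·‖ω₁ − ω₂‖ for all ω₁, ω₂ ∈ Ω̃. Hence the negative ELBO ℓ restricted to Ω̃ is hidden convex with moduli μ_C = (4U² + 4D + 1)^{−1/2} and μ_H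 = 1. -/

import Mathlib

open MeasureTheory ProbabilityTheory

noncomputable section

/-- Parameter space `ℝ^d × ℝ^d`, realized as a Euclidean space indexed by
`Fin d ⊕ Fin d` (first component at `Sum.inl`, second at `Sum.inr`). -/
abbrev Param (d : ℕ) := EuclideanSpace ℝ (Fin d ⊕ Fin d)

/-- The Cholesky parameter domain
`Θ̃ = {(μ, C) : |μ_i| ≤ U, C_ii > 0, D⁻¹ ≤ C_ii² ≤ D}`. -/
def ThetaT (d : ℕ) (U D : ℝ) : Set (Param d) :=
  {θ | ∀ i, |θ (Sum.inl i)| ≤ U ∧ 0 < θ (Sum.inr i) ∧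
    D⁻¹ ≤ (θ (Sum.inr i)) ^ 2 ∧ (θ (Sum.inr i)) ^ 2 ≤ D}

/-- The standard Gaussian product measure `γ_d` on `ℝ^d`. -/
def stdGauss (d : ℕ) : Measure (Fin d → ℝ) := Measure.pi fun _ => gaussianReal 0 1

/-- The function `L(μ, C) = ∫ f(μ + C ⊙ ε) dγ_d(ε) + (1/2)∑_i (C_ii² + μ_i² − 1) − ∑_i log C_ii`. -/
def cholObjective (d : ℕ) (f : (Fin d → ℝ) → ℝ) (θ : Param d) : ℝ :=
  (∫ ε, f (fun i => θ (Sum.inl i) + θ (Sum.inr i) * ε i) ∂(stdGauss d)) +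
    (1 / 2) * ∑ i, ((θ (Sum.inr i)) ^ 2 + (θ (Sum.inl i)) ^ 2 - 1) -
    ∑ i, Real.log (θ (Sum.inr i))

/-- The inverse reparameterization `c⁻¹(μ, C) = (μ, (C_ii² + μ_i²)_i)` from Cholesky
parameters to expectation parameters. -/
def cInv {d : ℕ} (θ : Param d) : Param d :=
  WithLp.toLp 2 fun k => match k with
  | Sum.inl i => θ (Sum.inl i)
  | Sum.inr i => (θ (Sum.inr i)) ^ 2 + (θ (Sum.inl i)) ^ 2

/- Auxiliary lemmas -/

lemma mp_one (m c : ℝ) :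
    MeasurePreserving (fun x : ℝ => m + c * x) (gaussianReal 0 1)
      (gaussianReal m ((c ^ 2).toNNReal)) := by
  refine ⟨(measurable_const_mul c).const_add m, ?_⟩
  have h1 : (fun x : ℝ => m + c * x) = (fun y => m + y) ∘ (fun x => c * x) := rfl
  rw [h1, ← Measure.map_map (measurable_const_add m) (measurable_const_mul c)]
  have h2 : ((gaussianReal 0 1).map (fun x => c * x)) =
      gaussianReal (c * 0) (⟨c ^ 2, sq_nonneg _⟩ * 1) := gaussianReal_map_const_mul c
  rw [h2]
  have h3 : ((gaussianReal (c * 0) (⟨c ^ 2, sq_nonneg _⟩ * 1)).map (fun y => m + y)) =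
      gaussianReal (c * 0 + m) (⟨c ^ 2, sq_nonneg _⟩ * 1) := gaussianReal_map_const_add m
  rw [h3]
  congr 1
  · ring
  · ext
    simp [Real.coe_toNNReal _ (sq_nonneg c)]
    exact congrArg NNReal.toReal (mul_one _)

lemma integrable_repar {d : ℕ} (f : (Fin d → ℝ) → ℝ)
    (hint : ∀ (m s : Fin d → ℝ), (∀ i, 0 < s i) →
      Integrable f (Measure.pi fun i => gaussianReal (m i) (s i).toNNReal))
    (m c : Fin d → ℝ) (hc : ∀ i, 0 < c i) :
    Integrable (fun ε => f (fun i => m i + c i * ε i)) (stdGauss d) := by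
  have hmp : MeasurePreserving (fun (ε : Fin d → ℝ) i => m i + c i * ε i) (stdGauss d)
      (Measure.pi fun i => gaussianReal (m i) (((c i) ^ 2).toNNReal)) :=
    measurePreserving_pi _ _ (fun i => mp_one (m i) (c i))
  have hf : Integrable f (Measure.pi fun i => gaussianReal (m i) (((c i) ^ 2).toNNReal)) :=
    hint m (fun i => (c i) ^ 2) (fun i => pow_pos (hc i) 2)
  exact (hmp.integrable_comp hf.aestronglyMeasurable).mpr hf

lemma mem_bounds {d : ℕ} {U D : ℝ} {θ : Param d} (hθ : θ ∈ ThetaT d U D) (i : Fin d) :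
    Real.sqrt D⁻¹ ≤ θ (Sum.inr i) ∧ θ (Sum.inr i) ≤ Real.sqrt D := by
  obtain ⟨_, hpos, hlb, hub⟩ := hθ i
  constructor
  · have := Real.sqrt_le_sqrt hlb
    rwa [Real.sqrt_sq hpos.le] at this
  · have := Real.sqrt_le_sqrt hub
    rwa [Real.sqrt_sq hpos.le] at this

lemma param_comb_apply {d : ℕ} (θ₁ θ₂ : Param d) (a b : ℝ) (k : Fin d ⊕ Fin d) :
    (a • θ₁ + b • θ₂) k = a * θ₁ k + b * θ₂ k := rfl

lemma convex_thetaT (d : ℕ) {U D : ℝ} (hD : 1 < D) : Convex ℝ (ThetaT d U D) := by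
  intro θ₁ h₁ θ₂ h₂ a b ha hb hab
  intro i
  obtain ⟨hμ₁, hp₁, hl₁, hu₁⟩ := h₁ i
  obtain ⟨hμ₂, hp₂, hl₂, hu₂⟩ := h₂ i
  have hD0 : (0:ℝ) < D := lt_trans one_pos hD
  have hs : 0 < Real.sqrt D⁻¹ := Real.sqrt_pos.mpr (inv_pos.mpr hD0)
  obtain ⟨hs₁, ht₁⟩ := mem_bounds h₁ i
  obtain ⟨hs₂, ht₂⟩ := mem_bounds h₂ i
  rw [param_comb_apply, param_comb_apply]
  have hxl : Real.sqrt D⁻¹ ≤ a * θ₁ (Sum.inr i) + b * θ₂ (Sum.inr i) := by nlinarith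
  have hxu : a * θ₁ (Sum.inr i) + b * θ₂ (Sum.inr i) ≤ Real.sqrt D := by nlinarith
  have hxp : 0 < a * θ₁ (Sum.inr i) + b * θ₂ (Sum.inr i) := lt_of_lt_of_le hs hxl
  refine ⟨?_, hxp, ?_, ?_⟩
  · have habs := abs_add_le (a * θ₁ (Sum.inl i)) (b * θ₂ (Sum.inl i))
    rw [abs_mul, abs_mul, abs_of_nonneg ha, abs_of_nonneg hb] at habs
    calc |a * θ₁ (Sum.inl i) + b * θ₂ (Sum.inl i)|
        ≤ a * |θ₁ (Sum.inl i)| + b * |θ₂ (Sum.inl i)| := habs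
      _ ≤ a * U + b * U := add_le_add (mul_le_mul_of_nonneg_left hμ₁ ha)
          (mul_le_mul_of_nonneg_left hμ₂ hb)
      _ = U := by rw [← add_mul, hab, one_mul]
  · have h := pow_le_pow_left₀ hs.le hxl 2
    rwa [Real.sq_sqrt (inv_nonneg.mpr hD0.le)] at h
  · have h := pow_le_pow_left₀ hxp.le hxu 2
    rwa [Real.sq_sqrt hD0.le] at h

lemma euclid_norm_sq {ι : Type*} [Fintype ι] (x : EuclideanSpace ℝ ι) :
    ‖x‖ ^ 2 = ∑ i, (x i) ^ 2 := by
  rw [EuclideanSpace.norm_eq, Real.sq_sqrt (by positivity)]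
  simp [Real.norm_eq_abs, sq_abs]

set_option maxHeartbeats 1000000 in
/-- Proposition 3.2, hidden convexity of the variational objective:
for `d ≥ 1`, `U ≥ 1`, `D > 1` and `f : ℝ^d → ℝ` convex and integrable against every
nondegenerate product Gaussian, (i) `L` is `1`-strongly convex on the convex set `Θ̃`,
and (ii) `c⁻¹` is `√(4U² + 4D + 1)`-Lipschitz on `Θ̃` (equivalently, `c` is expanding
with modulus `μ_C = (4U² + 4D + 1)^{-1/2}`); hence the negative ELBO restricted to `Ω̃`
is hidden convex with moduli `μ_C` and `μ_H = 1`. -/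
theorem hidden_convexity_of_variational_objective
    {d : ℕ} (hd : 1 ≤ d) {U D : ℝ} (hU : 1 ≤ U) (hD : 1 < D)
    (f : (Fin d → ℝ) → ℝ) (hconv : ConvexOn ℝ Set.univ f)
    (hint : ∀ (m s : Fin d → ℝ), (∀ i, 0 < s i) →
      Integrable f (Measure.pi fun i => gaussianReal (m i) (s i).toNNReal)) :
    StrongConvexOn (ThetaT d U D) 1 (cholObjective d f) ∧
    ∀ θ₁ ∈ ThetaT d U D, ∀ θ₂ ∈ ThetaT d U D,
      ‖cInv θ₁ - cInv θ₂‖ ≤ Real.sqrt (4 * U ^ 2 + 4 * D + 1) * ‖θ₁ - θ₂‖ := by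
  have hset : Convex ℝ (ThetaT d U D) := convex_thetaT d hD
  constructor
  · -- strong convexity
    rw [strongConvexOn_iff_convex]
    -- convexity of the integral term
    have hgconv : ConvexOn ℝ (ThetaT d U D)
        (fun θ : Param d => ∫ ε, f (fun i => θ (Sum.inl i) + θ (Sum.inr i) * ε i)
          ∂(stdGauss d)) := by
      refine ⟨hset, ?_⟩
      intro θ₁ h₁ θ₂ h₂ a b ha hb hab
      have hmem : a • θ₁ + b • θ₂ ∈ ThetaT d U D := hset h₁ h₂ ha hb hab
      have hI₁ : Integrable (fun ε => f (fun i => θ₁ (Sum.inl i) + θ₁ (Sum.inr i) * ε i))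
          (stdGauss d) := integrable_repar f hint _ _ (fun i => (h₁ i).2.1)
      have hI₂ : Integrable (fun ε => f (fun i => θ₂ (Sum.inl i) + θ₂ (Sum.inr i) * ε i))
          (stdGauss d) := integrable_repar f hint _ _ (fun i => (h₂ i).2.1)
      have hI₃ : Integrable (fun ε => f (fun i => (a • θ₁ + b • θ₂) (Sum.inl i) +
          (a • θ₁ + b • θ₂) (Sum.inr i) * ε i)) (stdGauss d) :=
        integrable_repar f hint _ _ (fun i => (hmem i).2.1)
      simp only [smul_eq_mul]
      calc (∫ ε, f (fun i => (a • θ₁ + b • θ₂) (Sum.inl i) +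
              (a • θ₁ + b • θ₂) (Sum.inr i) * ε i) ∂(stdGauss d))
          ≤ ∫ ε, (a * f (fun i => θ₁ (Sum.inl i) + θ₁ (Sum.inr i) * ε i) +
              b * f (fun i => θ₂ (Sum.inl i) + θ₂ (Sum.inr i) * ε i)) ∂(stdGauss d) := by
            refine integral_mono hI₃ ((hI₁.const_mul a).add (hI₂.const_mul b)) ?_
            intro ε
            have harg : (fun i => (a • θ₁ + b • θ₂) (Sum.inl i) +
                (a • θ₁ + b • θ₂) (Sum.inr i) * ε i) =
                a • (fun i => θ₁ (Sum.inl i) + θ₁ (Sum.inr i) * ε i) +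
                b • (fun i => θ₂ (Sum.inl i) + θ₂ (Sum.inr i) * ε i) := by
              funext i
              simp only [param_comb_apply, Pi.add_apply, Pi.smul_apply, smul_eq_mul]
              ring
            have h := hconv.2 (Set.mem_univ (fun i => θ₁ (Sum.inl i) + θ₁ (Sum.inr i) * ε i))
              (Set.mem_univ (fun i => θ₂ (Sum.inl i) + θ₂ (Sum.inr i) * ε i)) ha hb hab
            simp only [smul_eq_mul] at h
            exact le_of_eq_of_le (congrArg f harg) h
        _ = a * (∫ ε, f (fun i => θ₁ (Sum.inl i) + θ₁ (Sum.inr i) * ε i) ∂(stdGauss d)) +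
            b * (∫ ε, f (fun i => θ₂ (Sum.inl i) + θ₂ (Sum.inr i) * ε i) ∂(stdGauss d)) := by
            rw [integral_add (hI₁.const_mul a) (hI₂.const_mul b),
              integral_const_mul, integral_const_mul]
    -- convexity of the -log term
    have hneg : ConvexOn ℝ (Set.Ioi (0:ℝ)) (fun x => -Real.log x) := by
      have := strictConcaveOn_log_Ioi.concaveOn.neg
      simpa [Pi.neg_def] using this
    have hlconv : ConvexOn ℝ (ThetaT d U D)
        (fun θ : Param d => ∑ i, -Real.log (θ (Sum.inr i))) := by
      refine ⟨hset, ?_⟩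
      intro θ₁ h₁ θ₂ h₂ a b ha hb hab
      simp only [smul_eq_mul]
      rw [Finset.mul_sum, Finset.mul_sum, ← Finset.sum_add_distrib]
      refine Finset.sum_le_sum fun i _ => ?_
      have h := hneg.2 (Set.mem_Ioi.mpr (h₁ i).2.1) (Set.mem_Ioi.mpr (h₂ i).2.1) ha hb hab
      simp only [smul_eq_mul] at h
      simpa [param_comb_apply] using h
    have hsum : ConvexOn ℝ (ThetaT d U D)
        (fun θ : Param d =>
          ((∫ ε, f (fun i => θ (Sum.inl i) + θ (Sum.inr i) * ε i) ∂(stdGauss d)) +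
            ∑ i, -Real.log (θ (Sum.inr i))) + (-(d / 2 : ℝ))) :=
      (hgconv.add hlconv).add_const _
    have heq : (fun θ : Param d => cholObjective d f θ - 1 / 2 * ‖θ‖ ^ 2) =
        (fun θ : Param d =>
          ((∫ ε, f (fun i => θ (Sum.inl i) + θ (Sum.inr i) * ε i) ∂(stdGauss d)) +
            ∑ i, -Real.log (θ (Sum.inr i))) + (-(d / 2 : ℝ))) := by
      funext θ
      rw [show cholObjective d f θ =
        (∫ ε, f (fun i => θ (Sum.inl i) + θ (Sum.inr i) * ε i) ∂(stdGauss d)) +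
          (1 / 2) * ∑ i, ((θ (Sum.inr i)) ^ 2 + (θ (Sum.inl i)) ^ 2 - 1) -
          ∑ i, Real.log (θ (Sum.inr i)) from rfl, euclid_norm_sq, Fintype.sum_sum_type]
      rw [Finset.sum_sub_distrib, Finset.sum_add_distrib, Finset.sum_const, Finset.sum_neg_distrib]
      simp only [Finset.card_univ, Fintype.card_fin, nsmul_eq_mul, mul_one]
      ring
    rw [heq]
    exact hsum
  · -- Lipschitz bound for cInv
    intro θ₁ h₁ θ₂ h₂
    set K : ℝ := 4 * U ^ 2 + 4 * D + 1 with hK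
    have hK0 : (0:ℝ) ≤ K := by nlinarith
    have hsq : ‖cInv θ₁ - cInv θ₂‖ ^ 2 ≤ K * ‖θ₁ - θ₂‖ ^ 2 := by
      rw [euclid_norm_sq, euclid_norm_sq, Finset.mul_sum, Fintype.sum_sum_type,
        Fintype.sum_sum_type, ← Finset.sum_add_distrib, ← Finset.sum_add_distrib]
      refine Finset.sum_le_sum fun i _ => ?_
      have e1 : (cInv θ₁ - cInv θ₂) (Sum.inl i) = θ₁ (Sum.inl i) - θ₂ (Sum.inl i) := by simp [cInv]
      have e2 : (cInv θ₁ - cInv θ₂) (Sum.inr i) =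
          (θ₁ (Sum.inr i)) ^ 2 + (θ₁ (Sum.inl i)) ^ 2 -
            ((θ₂ (Sum.inr i)) ^ 2 + (θ₂ (Sum.inl i)) ^ 2) := by simp [cInv]
      have e3 : (θ₁ - θ₂) (Sum.inl i) = θ₁ (Sum.inl i) - θ₂ (Sum.inl i) := by simp [cInv]
      have e4 : (θ₁ - θ₂) (Sum.inr i) = θ₁ (Sum.inr i) - θ₂ (Sum.inr i) := by simp [cInv]
      rw [e1, e2, e3, e4]
      obtain ⟨hμ₁, hp₁, hl₁, hu₁⟩ := h₁ i
      obtain ⟨hμ₂, hp₂, hl₂, hu₂⟩ := h₂ i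
      have hμ₁' : (θ₁ (Sum.inl i)) ^ 2 ≤ U ^ 2 := by
        have := pow_le_pow_left₀ (abs_nonneg _) hμ₁ 2
        rwa [sq_abs] at this
      have hμ₂' : (θ₂ (Sum.inl i)) ^ 2 ≤ U ^ 2 := by
        have := pow_le_pow_left₀ (abs_nonneg _) hμ₂ 2
        rwa [sq_abs] at this
      set p := θ₁ (Sum.inl i)
      set q := θ₂ (Sum.inl i)
      set u := θ₁ (Sum.inr i)
      set v := θ₂ (Sum.inr i)
      have key : (u ^ 2 + p ^ 2 - (v ^ 2 + q ^ 2)) ^ 2 ≤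
          (4 * D + 4 * U ^ 2) * ((u - v) ^ 2 + (p - q) ^ 2) := by
        have h1 : (u + v) ^ 2 ≤ 4 * D := by nlinarith [sq_nonneg (u - v)]
        have h2 : (p + q) ^ 2 ≤ 4 * U ^ 2 := by nlinarith [sq_nonneg (p - q)]
        have h3 : u ^ 2 + p ^ 2 - (v ^ 2 + q ^ 2) = (u + v) * (u - v) + (p + q) * (p - q) := by
          ring
        rw [h3]
        nlinarith [sq_nonneg ((u + v) * (p - q) - (p + q) * (u - v)), sq_nonneg (u - v),
          sq_nonneg (p - q), mul_nonneg (sub_nonneg.mpr h1) (sq_nonneg (u - v)),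
          mul_nonneg (sub_nonneg.mpr h1) (sq_nonneg (p - q)),
          mul_nonneg (sub_nonneg.mpr h2) (sq_nonneg (u - v)),
          mul_nonneg (sub_nonneg.mpr h2) (sq_nonneg (p - q))]
      rw [hK]
      nlinarith [sq_nonneg (u - v), sq_nonneg (p - q)]
    calc ‖cInv θ₁ - cInv θ₂‖ = Real.sqrt (‖cInv θ₁ - cInv θ₂‖ ^ 2) :=
          (Real.sqrt_sq (norm_nonneg _)).symm
      _ ≤ Real.sqrt (K * ‖θ₁ - θ₂‖ ^ 2) := Real.sqrt_le_sqrt hsq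
      _ = Real.sqrt K * ‖θ₁ - θ₂‖ := by
          rw [Real.sqrt_mul hK0, Real.sqrt_sq (norm_nonneg _)]

end
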